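/- Let ℓ, q ∈ ℂ and let I ⊆ F be the two-sided ideal generated by the five elements x₂x₁ + x₁x₂, x₃x₁ + x₁x₃, x₃x₂ + x₂x₃ − ℓ x₁x₃ + q x₁x₂, x₁², and x₂² − ℓ x₁x₂. Then the images in F/I of the monomials x₁^{e₁} x₂^{e₂} x₃^{a₃}, over all e₁, e₂ ∈ {0, 1} and a₃ ∈ ℕ, form a ℂ-basis of F/I. (For a ≠ bℓ, this quotient is the Nichols algebra associated to the braiding of type R_{1,5} with t = −1 and p ≠ 0; it has Gelfand–Kirillov dimension 1.) -/

import Mathlib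

/-- The free associative unital `ℂ`-algebra on three generators. -/
abbrev F : Type := FreeAlgebra ℂ (Fin 3)

/-- The generators `x₁ = X 0`, `x₂ = X 1`, `x₃ = X 2`. -/
noncomputable def X (i : Fin 3) : F := FreeAlgebra.ι ℂ i

/-- Generators: `x₂x₁ + x₁x₂`, `x₃x₁ + x₁x₃`, `x₃x₂ + x₂x₃ − ℓ x₁x₃ + q x₁x₂`, `x₁²`, `x₂² − ℓ x₁x₂`. -/
noncomputable def S (l q : ℂ) : Set F :=
  {X 1 * X 0 + X 0 * X 1,
   X 2 * X 0 + X 0 * X 2,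
   X 2 * X 1 + X 1 * X 2 - l • (X 0 * X 2) + q • (X 0 * X 1),
   X 0 * X 0,
   X 1 * X 1 - l • (X 0 * X 1)}

/-- The relation whose two-sided-ideal closure is the ideal generated by `S`;
`RingQuot rel` is the quotient `F/I`. -/
def rel (l q : ℂ) : F → F → Prop := fun x y => x ∈ S l q ∧ y = 0

abbrev Idx : Type := Fin 2 × Fin 2 × ℕ
abbrev M : Type := Idx →₀ ℂ

noncomputable section

def bb (e : Idx) : M := Finsupp.single e 1

def f1 : Idx → M := fun e => ![bb (1, e.2.1, e.2.2), 0] e.1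

def f2 (l : ℂ) : Idx → M := fun e =>
  ![![bb (0, 1, e.2.2), l • bb (1, 1, e.2.2)],
    ![-bb (1, 1, e.2.2), 0]] e.1 e.2.1

def f3 (l q : ℂ) : Idx → M := fun e =>
  ![![bb (0, 0, e.2.2 + 1), -bb (0, 1, e.2.2 + 1) + l • bb (1, 0, e.2.2 + 1) - q • bb (1, 1, e.2.2)],
    ![-bb (1, 0, e.2.2 + 1), bb (1, 1, e.2.2 + 1)]] e.1 e.2.1

def L1 : M →ₗ[ℂ] M := Finsupp.lift M ℂ Idx f1
def L2 (l : ℂ) : M →ₗ[ℂ] M := Finsupp.lift M ℂ Idx (f2 l)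
def L3 (l q : ℂ) : M →ₗ[ℂ] M := Finsupp.lift M ℂ Idx (f3 l q)

theorem lift_single (f : Idx → M) (e : Idx) (c : ℂ) :
    (Finsupp.lift M ℂ Idx f) (Finsupp.single e c) = c • f e := by
  simp [Finsupp.lift_apply, Finsupp.sum_single_index]

example : L1 (bb (0,0,0)) = bb (1,0,0) := by
  simp [L1, bb, lift_single, f1]

theorem L1b (e : Idx) : L1 (bb e) = f1 e := by simp [L1, bb, lift_single]
theorem L2b (l : ℂ) (e : Idx) : L2 l (bb e) = f2 l e := by simp [L2, bb, lift_single]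
theorem L3b (l q : ℂ) (e : Idx) : L3 l q (bb e) = f3 l q e := by simp [L3, bb, lift_single]

theorem rel1 (l : ℂ) : L2 l * L1 + L1 * L2 l = 0 := by
  apply Module.Basis.ext Finsupp.basisSingleOne
  rintro ⟨e1, e2, a⟩
  have hb : ∀ e : Idx, (Finsupp.basisSingleOne (R := ℂ)) e = bb e := fun e => rfl
  fin_cases e1 <;> fin_cases e2 <;>
    simp [hb, Module.End.mul_apply, L1b, L2b, f1, f2, map_smul, map_neg] <;> module

set_option linter.unreachableTactic false
set_option linter.unusedTactic false

theorem rel2 (l q : ℂ) : L3 l q * L1 + L1 * L3 l q = 0 := by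
  apply Module.Basis.ext Finsupp.basisSingleOne
  rintro ⟨e1, e2, a⟩
  have hb : ∀ e : Idx, (Finsupp.basisSingleOne (R := ℂ)) e = bb e := fun e => rfl
  fin_cases e1 <;> fin_cases e2 <;>
    simp [hb, Module.End.mul_apply, L1b, L3b, f1, f3, map_smul, map_neg, map_add, map_sub] <;> module

theorem rel3 (l q : ℂ) :
    L3 l q * L2 l + L2 l * L3 l q - l • (L1 * L3 l q) + q • (L1 * L2 l) = 0 := by
  apply Module.Basis.ext Finsupp.basisSingleOne
  rintro ⟨e1, e2, a⟩
  have hb : ∀ e : Idx, (Finsupp.basisSingleOne (R := ℂ)) e = bb e := fun e => rfl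
  fin_cases e1 <;> fin_cases e2 <;>
    simp [hb, Module.End.mul_apply, LinearMap.smul_apply, L1b, L2b, L3b, f1, f2, f3,
      map_smul, map_neg, map_add, map_sub] <;> module

theorem rel4 : L1 * L1 = 0 := by
  apply Module.Basis.ext Finsupp.basisSingleOne
  rintro ⟨e1, e2, a⟩
  have hb : ∀ e : Idx, (Finsupp.basisSingleOne (R := ℂ)) e = bb e := fun e => rfl
  fin_cases e1 <;> fin_cases e2 <;>
    simp [hb, Module.End.mul_apply, L1b, f1] <;> module

theorem rel5 (l : ℂ) : L2 l * L2 l - l • (L1 * L2 l) = 0 := by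
  apply Module.Basis.ext Finsupp.basisSingleOne
  rintro ⟨e1, e2, a⟩
  have hb : ∀ e : Idx, (Finsupp.basisSingleOne (R := ℂ)) e = bb e := fun e => rfl
  fin_cases e1 <;> fin_cases e2 <;>
    simp [hb, Module.End.mul_apply, LinearMap.smul_apply, L1b, L2b, f1, f2, map_smul, map_neg] <;> module

def ψ (l q : ℂ) : F →ₐ[ℂ] Module.End ℂ M :=
  FreeAlgebra.lift ℂ (![L1, L2 l, L3 l q])

theorem ψX (l q : ℂ) (i : Fin 3) : ψ l q (X i) = ![L1, L2 l, L3 l q] i := by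
  simp [ψ, X]

theorem hS (l q : ℂ) : ∀ x y, rel l q x y → ψ l q x = ψ l q y := by
  rintro x y ⟨hx, rfl⟩
  rw [map_zero]
  simp only [S, Set.mem_insert_iff, Set.mem_singleton_iff] at hx
  rcases hx with rfl | rfl | rfl | rfl | rfl <;>
    simp only [map_add, map_mul, map_sub, map_smul, ψX,
      Matrix.cons_val_zero, Matrix.cons_val_one, Matrix.head_cons, Matrix.cons_val_two, Matrix.tail_cons]
  · exact rel1 l
  · exact rel2 l q
  · exact rel3 l q
  · exact rel4
  · exact rel5 l

def Φ (l q : ℂ) : RingQuot (rel l q) →ₐ[ℂ] Module.End ℂ M :=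
  RingQuot.liftAlgHom ℂ ⟨ψ l q, hS l q⟩

theorem Φmk (l q : ℂ) (w : F) :
    Φ l q (RingQuot.mkAlgHom ℂ (rel l q) w) = ψ l q w :=
  RingQuot.liftAlgHom_mkAlgHom_apply ℂ (ψ l q) (hS l q) w

theorem pow3 (l q : ℂ) (a k : ℕ) : ((L3 l q) ^ a) (bb (0, 0, k)) = bb (0, 0, k + a) := by
  induction a generalizing k with
  | zero => rfl
  | succ n ih =>
      rw [pow_succ, Module.End.mul_apply]
      -- ((L3)^n) applied after? pow_succ : L^(n+1) = L^n * L
      rw [show (L3 l q) (bb (0,0,k)) = bb (0,0,k+1) by simp [L3b, f3]]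
      rw [show ((L3 l q)^n) (bb (0,0,k+1)) = bb (0,0,k+1+n) from ih (k+1),
        show k+1+n = k+(n+1) by omega]

theorem key (l q : ℂ) (e : Idx) :
    (ψ l q (X 0 ^ (e.1 : ℕ) * X 1 ^ (e.2.1 : ℕ) * X 2 ^ e.2.2)) (bb (0, 0, 0)) = bb e := by
  obtain ⟨e1, e2, a⟩ := e
  simp only [map_mul, map_pow, ψX, Matrix.cons_val_zero, Matrix.cons_val_one, Matrix.head_cons,
    Matrix.cons_val_two, Matrix.tail_cons, Module.End.mul_apply]
  rw [show ((L3 l q)^a) (bb (0,0,0)) = bb (0,0,a) by simpa using pow3 l q a 0]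
  fin_cases e1 <;> fin_cases e2 <;>
    simp [L1b, L2b, f1, f2]

theorem indep (l q : ℂ) :
    LinearIndependent ℂ (fun e : Fin 2 × Fin 2 × ℕ =>
      RingQuot.mkAlgHom ℂ (rel l q) (X 0 ^ (e.1 : ℕ) * X 1 ^ (e.2.1 : ℕ) * X 2 ^ e.2.2)) := by
  let ev : RingQuot (rel l q) →ₗ[ℂ] M :=
    { toFun := fun v => Φ l q v (bb (0, 0, 0))
      map_add' := fun x y => by simp [map_add]
      map_smul' := fun c x => by simp [map_smul] }
  apply LinearIndependent.of_comp ev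
  have : (ev ∘ fun e : Idx =>
      RingQuot.mkAlgHom ℂ (rel l q) (X 0 ^ (e.1 : ℕ) * X 1 ^ (e.2.1 : ℕ) * X 2 ^ e.2.2)) = bb := by
    funext e
    show Φ l q (RingQuot.mkAlgHom ℂ (rel l q) _) (bb (0,0,0)) = bb e
    rw [Φmk, key]
  rw [this]
  have := (Finsupp.basisSingleOne (R := ℂ) (ι := Idx)).linearIndependent
  convert this using 1; funext e; simp [bb]

section Span
variable (l q : ℂ)

local notation "mkA" => RingQuot.mkAlgHom ℂ (rel l q)

theorem mkS {r : F} (hr : r ∈ S l q) : mkA r = 0 := by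
  have := RingQuot.mkAlgHom_rel ℂ (show rel l q r 0 from ⟨hr, rfl⟩)
  simpa using this

theorem h10 : mkA (X 1) * mkA (X 0) = -(mkA (X 0) * mkA (X 1)) := by
  have := mkS l q (show X 1 * X 0 + X 0 * X 1 ∈ S l q by simp [S])
  rw [map_add, map_mul, map_mul] at this
  linear_combination (norm := noncomm_ring) this

theorem h20 : mkA (X 2) * mkA (X 0) = -(mkA (X 0) * mkA (X 2)) := by
  have := mkS l q (show X 2 * X 0 + X 0 * X 2 ∈ S l q by simp [S])
  rw [map_add, map_mul, map_mul] at this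
  linear_combination (norm := noncomm_ring) this

theorem h21 : mkA (X 2) * mkA (X 1)
    = -(mkA (X 1) * mkA (X 2)) + l • (mkA (X 0) * mkA (X 2)) - q • (mkA (X 0) * mkA (X 1)) := by
  have := mkS l q (show X 2 * X 1 + X 1 * X 2 - l • (X 0 * X 2) + q • (X 0 * X 1) ∈ S l q by simp [S])
  rw [map_add, map_sub, map_add, map_smul, map_smul, map_mul, map_mul, map_mul, map_mul] at this
  linear_combination (norm := noncomm_ring) this

theorem h00 : mkA (X 0) * mkA (X 0) = 0 := by
  have := mkS l q (show X 0 * X 0 ∈ S l q by simp [S])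
  rw [map_mul] at this
  exact this

theorem h11 : mkA (X 1) * mkA (X 1) = l • (mkA (X 0) * mkA (X 1)) := by
  have := mkS l q (show X 1 * X 1 - l • (X 0 * X 1) ∈ S l q by simp [S])
  rw [map_sub, map_smul, map_mul, map_mul] at this
  linear_combination (norm := noncomm_ring) this

end Span

section Span2
variable (l q : ℂ)

local notation "mkA" => RingQuot.mkAlgHom ℂ (rel l q)

def fam : Idx → RingQuot (rel l q) := fun e =>
  RingQuot.mkAlgHom ℂ (rel l q) (X 0 ^ (e.1 : ℕ) * X 1 ^ (e.2.1 : ℕ) * X 2 ^ e.2.2)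

def T : Submodule ℂ (RingQuot (rel l q)) := Submodule.span ℂ (Set.range (fam l q))

theorem famT (e : Idx) : fam l q e ∈ T l q := Submodule.subset_span ⟨e, rfl⟩

theorem m00 (a : ℕ) : mkA (X 2) ^ a ∈ T l q := by
  simpa [fam, map_mul, map_pow] using famT l q (0, 0, a)

theorem m01 (a : ℕ) : mkA (X 1) * mkA (X 2) ^ a ∈ T l q := by
  simpa [fam, map_mul, map_pow] using famT l q (0, 1, a)

theorem m10 (a : ℕ) : mkA (X 0) * mkA (X 2) ^ a ∈ T l q := by
  simpa [fam, map_mul, map_pow] using famT l q (1, 0, a)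

theorem m11 (a : ℕ) : mkA (X 0) * (mkA (X 1) * mkA (X 2) ^ a) ∈ T l q := by
  simpa [fam, map_mul, map_pow, mul_assoc] using famT l q (1, 1, a)

end Span2

section Span3
variable (l q : ℂ)

local notation "mkA" => RingQuot.mkAlgHom ℂ (rel l q)
local notation "y0" => RingQuot.mkAlgHom ℂ (rel l q) (X 0)
local notation "y1" => RingQuot.mkAlgHom ℂ (rel l q) (X 1)
local notation "y2" => RingQuot.mkAlgHom ℂ (rel l q) (X 2)

theorem stab0mem (e : Idx) : y0 * fam l q e ∈ T l q := by
  obtain ⟨e1, e2, a⟩ := e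
  fin_cases e1 <;> fin_cases e2 <;> simp only [fam, map_mul, map_pow] <;>
    simp only [Fin.isValue, Fin.val_zero, Fin.val_one, pow_zero, pow_one, one_mul, mul_one]
  · exact m10 l q a
  · simpa [mul_assoc] using m11 l q a
  · have h : y0 * (y0 * y2 ^ a) = 0 := by
      linear_combination (norm := noncomm_ring) h00 l q * (mkA (X 2) ^ a)
    rw [h]; exact zero_mem _
  · have h : y0 * (y0 * y1 * y2 ^ a) = 0 := by
      linear_combination (norm := noncomm_ring) h00 l q * (mkA (X 1) * mkA (X 2) ^ a)
    rw [h]; exact zero_mem _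

theorem qnm (u v : RingQuot (rel l q)) : -u * v = -(u * v) := neg_mul u v
theorem qmn (u v : RingQuot (rel l q)) : u * -v = -(u * v) := mul_neg u v
theorem qzm (v : RingQuot (rel l q)) : (0 : RingQuot (rel l q)) * v = 0 := zero_mul v
theorem qsz (c : ℂ) : c • (0 : RingQuot (rel l q)) = 0 := smul_zero c
theorem qnz : -(0 : RingQuot (rel l q)) = 0 := neg_zero
theorem qnn (u : RingQuot (rel l q)) : - -u = u := neg_neg u
theorem qaz (u : RingQuot (rel l q)) : u + 0 = u := add_zero u
theorem qsbz (u : RingQuot (rel l q)) : u - 0 = u := sub_zero u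

theorem c11 (a : ℕ) : y1 * (y1 * y2 ^ a) = l • (y0 * (y1 * y2 ^ a)) := by
  rw [← mul_assoc, h11, smul_mul_assoc, mul_assoc]

theorem c21 (a : ℕ) : y2 * (y1 * y2 ^ a)
    = -(y1 * y2 ^ (a + 1)) + l • (y0 * y2 ^ (a + 1)) - q • (y0 * (y1 * y2 ^ a)) := by
  rw [← mul_assoc, h21, sub_mul, add_mul, qnm, smul_mul_assoc, smul_mul_assoc,
    mul_assoc, mul_assoc, mul_assoc, ← pow_succ']

theorem stab1mem (e : Idx) : y1 * fam l q e ∈ T l q := by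
  obtain ⟨e1, e2, a⟩ := e
  fin_cases e1 <;> fin_cases e2 <;> simp only [fam, map_mul, map_pow] <;>
    simp only [Fin.isValue, Fin.val_zero, Fin.val_one, pow_zero, pow_one, one_mul, mul_one]
  · exact m01 l q a
  · rw [c11]; exact Submodule.smul_mem _ _ (m11 l q a)
  · have h : y1 * (y0 * y2 ^ a) = -(y0 * (y1 * y2 ^ a)) := by
      rw [← mul_assoc, h10, qnm, mul_assoc]
    rw [h]; exact neg_mem (m11 l q a)
  · have h : y1 * (y0 * y1 * y2 ^ a) = 0 := by
      calc y1 * (y0 * y1 * y2 ^ a) = (y1 * y0) * (y1 * y2 ^ a) := by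
            rw [mul_assoc (mkA (X 0)), ← mul_assoc]
      _ = (-(y0 * y1)) * (y1 * y2 ^ a) := by rw [h10]
      _ = -(y0 * (y1 * (y1 * y2 ^ a))) := by rw [qnm, mul_assoc]
      _ = -(y0 * (l • (y0 * (y1 * y2 ^ a)))) := by rw [c11]
      _ = -(l • ((y0 * y0) * (y1 * y2 ^ a))) := by
            rw [mul_smul_comm, ← mul_assoc (mkA (X 0)) (mkA (X 0))]
      _ = 0 := by rw [h00, qzm, qsz, qnz]
    rw [h]; exact zero_mem _

theorem stab2mem (e : Idx) : y2 * fam l q e ∈ T l q := by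
  obtain ⟨e1, e2, a⟩ := e
  fin_cases e1 <;> fin_cases e2 <;> simp only [fam, map_mul, map_pow] <;>
    simp only [Fin.isValue, Fin.val_zero, Fin.val_one, pow_zero, pow_one, one_mul, mul_one]
  · rw [← pow_succ']; exact m00 l q (a + 1)
  · rw [c21]
    exact sub_mem (add_mem (neg_mem (m01 l q (a + 1))) (Submodule.smul_mem _ _ (m10 l q (a + 1))))
      (Submodule.smul_mem _ _ (m11 l q a))
  · have h : y2 * (y0 * y2 ^ a) = -(y0 * y2 ^ (a + 1)) := by
      rw [← mul_assoc, h20, qnm, mul_assoc, ← pow_succ']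
    rw [h]; exact neg_mem (m10 l q (a + 1))
  · have h : y2 * (y0 * y1 * y2 ^ a) = y0 * (y1 * y2 ^ (a + 1)) := by
      calc y2 * (y0 * y1 * y2 ^ a) = (y2 * y0) * (y1 * y2 ^ a) := by
            rw [mul_assoc (mkA (X 0)), ← mul_assoc]
      _ = (-(y0 * y2)) * (y1 * y2 ^ a) := by rw [h20]
      _ = -(y0 * (y2 * (y1 * y2 ^ a))) := by rw [qnm, mul_assoc]
      _ = -(y0 * (-(y1 * y2 ^ (a + 1)) + l • (y0 * y2 ^ (a + 1)) - q • (y0 * (y1 * y2 ^ a)))) := by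
            rw [c21]
      _ = -(-(y0 * (y1 * y2 ^ (a + 1))) + l • ((y0 * y0) * y2 ^ (a + 1))
            - q • ((y0 * y0) * (y1 * y2 ^ a))) := by
            rw [mul_sub, mul_add, qmn, mul_smul_comm, mul_smul_comm,
              ← mul_assoc (mkA (X 0)) (mkA (X 0)) (mkA (X 2) ^ (a + 1)),
              ← mul_assoc (mkA (X 0)) (mkA (X 0)) (mkA (X 1) * mkA (X 2) ^ a)]
      _ = y0 * (y1 * y2 ^ (a + 1)) := by
            rw [h00, qzm, qzm, qsz, qsz, qaz, qsbz, qnn]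
    rw [h]; exact m11 l q (a + 1)

end Span3

section Span4
variable (l q : ℂ)

local notation "mkA" => RingQuot.mkAlgHom ℂ (rel l q)

theorem qmz (u : RingQuot (rel l q)) : u * 0 = 0 := mul_zero u
theorem qm1 (u : RingQuot (rel l q)) : u * 1 = u := mul_one u
theorem qsd (c : ℂ) (v : RingQuot (rel l q)) : (algebraMap ℂ _ c) * v = c • v :=
  (Algebra.smul_def c v).symm

theorem stabAll (w : F) : ∀ v ∈ T l q, mkA w * v ∈ T l q := by
  induction w using FreeAlgebra.induction with
  | grade0 c =>
      intro v hv
      rw [AlgHom.commutes, qsd]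
      exact Submodule.smul_mem _ _ hv
  | grade1 i =>
      intro v hv
      induction hv using Submodule.span_induction with
      | mem x hx =>
          obtain ⟨e, rfl⟩ := hx
          fin_cases i
          · exact stab0mem l q e
          · exact stab1mem l q e
          · exact stab2mem l q e
      | zero => rw [qmz]; exact zero_mem _
      | add x y _ _ hx hy => rw [mul_add]; exact add_mem hx hy
      | smul c x _ hx => rw [mul_smul_comm]; exact Submodule.smul_mem _ _ hx
  | mul a b ha hb =>
      intro v hv
      rw [map_mul, mul_assoc]
      exact ha _ (hb v hv)
  | add a b ha hb =>
      intro v hv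
      rw [map_add, add_mul]
      exact add_mem (ha v hv) (hb v hv)

theorem spanTop : T l q = ⊤ := by
  rw [eq_top_iff]
  rintro x -
  obtain ⟨w, rfl⟩ := RingQuot.mkAlgHom_surjective ℂ (rel l q) x
  have one_mem : (1 : RingQuot (rel l q)) ∈ T l q := by
    simpa [fam, map_one] using famT l q (0, 0, 0)
  have := stabAll l q w 1 one_mem
  rwa [qm1] at this

end Span4

/-- the images in `F/I` of the monomials `x₁^{e₁} x₂^{e₂} x₃^{a₃}`, `e₁, e₂ ∈ {0,1}`, `a₃ ∈ ℕ`, form a `ℂ`-basis. -/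
theorem basis_R15_t_neg_one (l q : ℂ) :
    LinearIndependent ℂ (fun e : Fin 2 × Fin 2 × ℕ =>
      RingQuot.mkAlgHom ℂ (rel l q) (X 0 ^ (e.1 : ℕ) * X 1 ^ (e.2.1 : ℕ) * X 2 ^ e.2.2)) ∧
    Submodule.span ℂ (Set.range (fun e : Fin 2 × Fin 2 × ℕ =>
      RingQuot.mkAlgHom ℂ (rel l q) (X 0 ^ (e.1 : ℕ) * X 1 ^ (e.2.1 : ℕ) * X 2 ^ e.2.2))) = ⊤ :=
  ⟨indep l q, spanTop l q⟩
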